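/- arXiv:1607.07339 — 4 statements merged into one kernel-verified Lean document; each statement's English description precedes it below -/
import Mathlib

section
/- For any n ≥ 1, any 1 ≤ k ≤ n, and any positive integers a_1,...,a_n, one has (a_k+1)/2 ≤ q_n(a_1,...,a_n) / q_{n-1}(a_1,...,a_{k-1}, a_{k+1},...,a_n) ≤ a_k + 1, where q_m denotes the denominator of the finite continued fraction [b_1,...,b_m]. -/
open MeasureTheory Filter Set

/-- The Gauss map `T(x) = 1/x - ⌊1/x⌋` (with `T 0 = 0`). -/
noncomputable def gaussMap (x : ℝ) : ℝ := if x = 0 then 0 else 1/x - ⌊1/x⌋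

/-- `pquot x n` is the `(n+1)`-st partial quotient `a_{n+1}(x) = ⌊1 / T^n x⌋`. -/
noncomputable def pquot (x : ℝ) (n : ℕ) : ℕ := (⌊1 / (gaussMap^[n] x)⌋).toNat

/-- One step of the continuant recursion `q_{j+1} = b_{j+1} q_j + q_{j-1}`. -/
def cdStep (p : ℕ × ℕ) (b : ℕ) : ℕ × ℕ := (b * p.1 + p.2, p.1)

/-- Denominator `q_n(b_1,…,b_n)` of the finite continued fraction `[b_1,…,b_n]`. -/
def contDenom (w : List ℕ) : ℕ := (w.foldl cdStep (1, 0)).1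

/-- Numerator `p_n(b_1,…,b_n)` of the finite continued fraction `[b_1,…,b_n]`. -/
def contNum (w : List ℕ) : ℕ := (w.foldl cdStep (0, 1)).1

/-- The continued fraction cylinder `I(w) = {x ∈ [0,1) : a_i(x) = w_i, 1 ≤ i ≤ |w|}`. -/
def cyl (w : List ℕ) : Set ℝ :=
  {x | x ∈ Set.Ico (0:ℝ) 1 ∧ ∀ i < w.length, pquot x i = w.getD i 0}

open scoped Classical in
/-- The metric `d(x,y) = 2^{-inf{j ≥ 0 : x_{j+1} ≠ y_{j+1}}}` on `ℕ^ℕ` (0-indexed). -/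
noncomputable def dseq (x y : ℕ → ℕ) : ℝ :=
  if h : ∃ j, x j ≠ y j then (2:ℝ)⁻¹ ^ (Nat.find h) else 0

/-- The one-sided shift on `ℕ^ℕ`. -/
def shift (x : ℕ → ℕ) : ℕ → ℕ := fun n => x (n+1)

/-- The symbolic space `Σ_N = {1,…,N}^ℕ` inside `ℕ^ℕ`. -/
def SigmaN (N : ℕ) : Set (ℕ → ℕ) := {x | ∀ i, 1 ≤ x i ∧ x i ≤ N}

/-- `g_N(x) = (N, 1, x_1, 1,1, x_1,x_2, 1,1,1, x_1,x_2,x_3, …)` (0-indexed). -/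
def gN (N : ℕ) (x : ℕ → ℕ) : ℕ → ℕ := fun n =>
  if n = 0 then N else
    let j := n - 1
    let k := (Nat.sqrt (4*j+1) + 1) / 2
    let o := j - k*(k-1)
    if o < k then 1 else x (o - k)

/-- `Θ_N(x) = (x_1, x_1,x_2, x_1,x_2,x_3, …)` (0-indexed). -/
def thetaN (x : ℕ → ℕ) : ℕ → ℕ := fun j =>
  let k := (Nat.sqrt (8*j+1) + 1) / 2
  x (j - k*(k-1)/2)

/-- The index set `R = ∪_m {m³ + t : 1 ≤ t ≤ m}`. -/
def inR (n : ℕ) : Prop := ∃ m, 1 ≤ m ∧ m^3 + 1 ≤ n ∧ n ≤ m^3 + m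

instance : DecidablePred inR := fun n =>
  decidable_of_iff (∃ m ∈ Finset.Icc 1 n, m^3 + 1 ≤ n ∧ n ≤ m^3 + m) (by
    constructor
    · rintro ⟨m, hm, h⟩; exact ⟨m, (Finset.mem_Icc.mp hm).1, h⟩
    · rintro ⟨m, h1, h2, h3⟩
      refine ⟨m, Finset.mem_Icc.mpr ⟨h1, ?_⟩, h2, h3⟩
      have : m ≤ m^3 := Nat.le_self_pow (by norm_num) m
      omega)

/-- `t(n) = #{k ≥ 1 : r_k ≤ n}`, the number of elements of `R` at most `n`. -/
def tcount (n : ℕ) : ℕ := ((Finset.Icc 1 n).filter inR).card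

/-- `Ψ_N(x,y)`: put `y_k` at position `r_k ∈ R` and fill the other
positions with the entries of `x` in order (positions are 1-indexed `i+1`). -/
def psiN (x y : ℕ → ℕ) : ℕ → ℕ := fun i =>
  let n := i + 1
  if inR n then y (tcount n - 1) else x (n - tcount n - 1)

/-- `Δ_N(x) = Ψ_N(x, Θ_N(g_N(x)))`. -/
def deltaN (N : ℕ) (x : ℕ → ℕ) : ℕ → ℕ := psiN x (thetaN (gN N x))

/-- The value `[a_1, a_2, …]` of an infinite continued fraction, as the limit
of its convergents `p_n/q_n`. -/
noncomputable def cfVal (a : ℕ → ℕ) : ℝ :=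
  limUnder atTop fun n => (contNum (List.ofFn fun i : Fin n => a i) : ℝ) /
    (contDenom (List.ofFn fun i : Fin n => a i) : ℝ)

/-- The orbit of `x` under the Gauss map is dense in `[0,1]`. -/
def gaussOrbitDense (x : ℝ) : Prop :=
  Set.Icc (0:ℝ) 1 ⊆ closure (Set.range fun n => gaussMap^[n] x)

/-- The set `D` of points of `[0,1)` with dense Gauss orbit. -/
def Dset : Set ℝ := {x ∈ Set.Ico (0:ℝ) 1 | gaussOrbitDense x}

/-- The set `D^c` of points of `[0,1)` with non-dense Gauss orbit. -/
def Dcset : Set ℝ := {x ∈ Set.Ico (0:ℝ) 1 | ¬ gaussOrbitDense x}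



private lemma cd_foldl_linear (w : List ℕ) : ∀ p q : ℕ,
    w.foldl cdStep (p, q) =
      (p * (w.foldl cdStep (1,0)).1 + q * (w.foldl cdStep (0,1)).1,
       p * (w.foldl cdStep (1,0)).2 + q * (w.foldl cdStep (0,1)).2) := by
  induction w with
  | nil => intro p q; simp [cdStep]
  | cons b t ih =>
    intro p q
    simp only [List.foldl_cons, cdStep]
    rw [ih (b * p + q) p, ih (b * 1 + 0) 1, ih (b * 0 + 1) 0]
    simp only [Prod.mk.injEq]
    constructor <;> ring

private lemma cd_foldl_mono (w : List ℕ) : ∀ p q p' q' : ℕ, p ≤ p' → q ≤ q' →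
    (w.foldl cdStep (p, q)).1 ≤ (w.foldl cdStep (p', q')).1 ∧
    (w.foldl cdStep (p, q)).2 ≤ (w.foldl cdStep (p', q')).2 := by
  induction w with
  | nil => intro p q p' q' h1 h2; exact ⟨h1, h2⟩
  | cons b t ih =>
    intro p q p' q' h1 h2
    simp only [List.foldl_cons, cdStep]
    exact ih _ _ _ _ (by nlinarith) h1

/-- invariant: 1 ≤ fst and snd ≤ fst, for positive-entry lists -/
private lemma cd_foldl_pos (w : List ℕ) (hw : ∀ a ∈ w, 1 ≤ a) : ∀ p q : ℕ, 1 ≤ p → q ≤ p →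
    1 ≤ (w.foldl cdStep (p, q)).1 ∧ (w.foldl cdStep (p, q)).2 ≤ (w.foldl cdStep (p, q)).1 := by
  induction w with
  | nil => intro p q h1 h2; exact ⟨h1, h2⟩
  | cons b t ih =>
    intro p q h1 h2
    have hb : 1 ≤ b := hw b (by simp)
    simp only [List.foldl_cons, cdStep]
    exact ih (fun a ha => hw a (by simp [ha])) _ _ (by nlinarith) (by nlinarith)

private lemma contDenom_bounds (u v : List ℕ) (a : ℕ) (ha : 1 ≤ a)
    (hu : ∀ x ∈ u, 1 ≤ x) (hv : ∀ x ∈ v, 1 ≤ x) :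
    ((a : ℝ) + 1) / 2 ≤ (contDenom (u ++ a :: v) : ℝ) / (contDenom (u ++ v) : ℝ) ∧
    (contDenom (u ++ a :: v) : ℝ) / (contDenom (u ++ v) : ℝ) ≤ (a : ℝ) + 1 := by
  obtain ⟨⟨A, B⟩, hAB⟩ : ∃ p, u.foldl cdStep (1,0) = p := ⟨_, rfl⟩
  obtain ⟨⟨C, C'⟩, hCv⟩ : ∃ p, v.foldl cdStep (1,0) = p := ⟨_, rfl⟩
  obtain ⟨⟨D, D'⟩, hDv⟩ : ∃ p, v.foldl cdStep (0,1) = p := ⟨_, rfl⟩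
  have hABu := cd_foldl_pos u hu 1 0 le_rfl (by norm_num)
  rw [hAB] at hABu
  have hA1 : 1 ≤ A := hABu.1
  have hBA : B ≤ A := hABu.2
  have hCv' := cd_foldl_pos v hv 1 0 le_rfl (by norm_num)
  rw [hCv] at hCv'
  have hC1 : 1 ≤ C := hCv'.1
  have hDC : D ≤ C := by
    cases v with
    | nil =>
      simp only [List.foldl_nil] at hCv hDv
      rw [Prod.mk.injEq] at hCv hDv; omega
    | cons b t =>
      have hb : 1 ≤ b := hv b (by simp)
      simp only [List.foldl_cons, cdStep] at hCv hDv
      have := (cd_foldl_mono t (b*0+1) 0 (b*1+0) 1 (by omega) (by omega)).1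
      rw [hCv, hDv] at this
      exact this
  have e1 : contDenom (u ++ a :: v) = a * A * C + A * D + B * C := by
    rw [contDenom, List.foldl_append, hAB]
    simp only [List.foldl_cons, cdStep]
    rw [cd_foldl_linear v (a * A + B) A, hCv, hDv]
    simp only
    ring
  have e2 : contDenom (u ++ v) = A * C + B * D := by
    rw [contDenom, List.foldl_append, hAB, cd_foldl_linear v A B, hCv, hDv]
  rw [e1, e2]
  push_cast
  have hA' : (1:ℝ) ≤ A := by exact_mod_cast hA1
  have hC' : (1:ℝ) ≤ C := by exact_mod_cast hC1
  have hB' : (B:ℝ) ≤ A := by exact_mod_cast hBA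
  have hD' : (D:ℝ) ≤ C := by exact_mod_cast hDC
  have hB0 : (0:ℝ) ≤ B := by positivity
  have hD0 : (0:ℝ) ≤ D := by positivity
  have ha' : (1:ℝ) ≤ a := by exact_mod_cast ha
  have hden' : (0:ℝ) < (A:ℝ) * C + B * D := by nlinarith
  have hA0 : (0:ℝ) ≤ A := le_trans zero_le_one hA'
  have hBDAC : (B:ℝ) * D ≤ A * C := mul_le_mul hB' hD' hD0 hA0
  constructor
  · rw [div_le_div_iff₀ (by norm_num) hden']
    nlinarith [mul_nonneg (sub_nonneg.mpr ha') (sub_nonneg.mpr hBDAC),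
      mul_nonneg hB0 (sub_nonneg.mpr hD'), mul_nonneg hA0 hD0]
  · rw [div_le_iff₀ hden']
    nlinarith [mul_nonneg (sub_nonneg.mpr hB') (sub_nonneg.mpr hD'),
      mul_nonneg (le_trans zero_le_one ha') (mul_nonneg hB0 hD0)]

/-- `(a_k+1)/2 ≤ q_n(a_1,…,a_n) / q_{n-1}(a_1,…,a_{k-1},a_{k+1},…,a_n) ≤ a_k+1`. -/
theorem contDenom_erase_ratio (n k : ℕ) (hn : 1 ≤ n) (hk1 : 1 ≤ k) (hkn : k ≤ n)
    (w : List ℕ) (hlen : w.length = n) (hpos : ∀ a ∈ w, 1 ≤ a) :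
    ((w.getD (k-1) 0 : ℝ) + 1) / 2 ≤
      (contDenom w : ℝ) / (contDenom (w.eraseIdx (k-1)) : ℝ) ∧
    (contDenom w : ℝ) / (contDenom (w.eraseIdx (k-1)) : ℝ) ≤ (w.getD (k-1) 0 : ℝ) + 1 := by
  set i := k - 1 with hi
  have hilt : i < w.length := by omega
  have hget : w.getD i 0 = w[i] := List.getD_eq_getElem w 0 hilt
  have hsplit : w = w.take i ++ w[i] :: w.drop (i+1) := by
    conv_lhs => rw [← List.take_append_drop i w]
    rw [List.drop_eq_getElem_cons hilt]
  have herase : w.eraseIdx i = w.take i ++ w.drop (i+1) := List.eraseIdx_eq_take_drop_succ w i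
  have ha : 1 ≤ w[i] := hpos _ (List.getElem_mem hilt)
  have hu : ∀ x ∈ w.take i, 1 ≤ x := fun x hx => hpos x (List.mem_of_mem_take hx)
  have hv : ∀ x ∈ w.drop (i+1), 1 ≤ x := fun x hx => hpos x (List.mem_of_mem_drop hx)
  have hcd : contDenom w = contDenom (w.take i ++ w[i] :: w.drop (i+1)) :=
    congrArg contDenom hsplit
  rw [hget, herase, hcd]
  exact contDenom_bounds (w.take i) (w.drop (i+1)) w[i] ha hu hv
end

section
/- The set D^c of points x ∈ [0,1) whose orbit under the Gauss map is not dense in [0,1] is a set of the first category (meager) in [0,1]. -/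
open MeasureTheory Filter Set

namespace GaussAux

/-! ### Basic facts about the Gauss map at irrational points -/

lemma gaussMap_eq_fract {x : ℝ} (hx : x ≠ 0) : gaussMap x = Int.fract x⁻¹ := by
  rw [gaussMap, if_neg hx, Int.fract, one_div]

lemma step_mem {x : ℝ} (hx : x ∈ Set.Ioo (0:ℝ) 1) (hirr : Irrational x) :
    gaussMap x ∈ Set.Ioo (0:ℝ) 1 ∧ Irrational (gaussMap x) := by
  have hx0 : x ≠ 0 := ne_of_gt hx.1
  have hinv : Irrational x⁻¹ := hirr.inv
  have hirr' : Irrational (gaussMap x) := by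
    rw [gaussMap_eq_fract hx0, Int.fract]
    exact hinv.sub_intCast _
  have hnn : 0 ≤ gaussMap x := by
    rw [gaussMap_eq_fract hx0]; exact Int.fract_nonneg x⁻¹
  refine ⟨⟨?_, ?_⟩, hirr'⟩
  · rcases hnn.lt_or_eq with h | h
    · exact h
    · exact absurd h.symm (by simpa using hirr'.ne_zero)
  · rw [gaussMap_eq_fract hx0]; exact Int.fract_lt_one x⁻¹

lemma orbit_mem {x : ℝ} (hx : x ∈ Set.Ioo (0:ℝ) 1) (hirr : Irrational x) (n : ℕ) :
    gaussMap^[n] x ∈ Set.Ioo (0:ℝ) 1 ∧ Irrational (gaussMap^[n] x) := by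
  induction n with
  | zero => exact ⟨hx, hirr⟩
  | succ n ih =>
    rw [Function.iterate_succ_apply']
    exact step_mem ih.1 ih.2

lemma pquot_pos {x : ℝ} (hx : x ∈ Set.Ioo (0:ℝ) 1) (hirr : Irrational x) (n : ℕ) :
    1 ≤ pquot x n := by
  obtain ⟨⟨h0, h1⟩, -⟩ := orbit_mem hx hirr n
  have : (1:ℝ) < 1 / gaussMap^[n] x := (lt_div_iff₀ h0).mpr (by linarith)
  have : (1:ℤ) ≤ ⌊1 / gaussMap^[n] x⌋ := by
    exact_mod_cast Int.le_floor.mpr (by exact_mod_cast this.le)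
  unfold pquot; omega

lemma floor_one_div_cast {u : ℝ} (hu : u ∈ Set.Ioo (0:ℝ) 1) :
    (((⌊1/u⌋.toNat : ℕ) : ℝ)) = (⌊1/u⌋ : ℝ) := by
  have : (1:ℝ) < 1/u := (lt_div_iff₀ hu.1).mpr (by linarith [hu.2])
  have h1 : (1:ℤ) ≤ ⌊1/u⌋ := Int.le_floor.mpr (by exact_mod_cast this.le)
  have := Int.toNat_of_nonneg (by omega : (0:ℤ) ≤ ⌊1/u⌋)
  exact_mod_cast congrArg (fun z : ℤ => (z : ℝ)) this

/-- The inverse branch identity: `u = 1/(a₁(u) + T u)`. -/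
lemma inv_branch {u : ℝ} (hu : u ∈ Set.Ioo (0:ℝ) 1) :
    (((⌊1/u⌋.toNat : ℕ) : ℝ) + gaussMap u)⁻¹ = u := by
  have hu0 : u ≠ 0 := ne_of_gt hu.1
  have h1 : gaussMap u = 1/u - ⌊1/u⌋ := by simp [gaussMap, hu0]
  rw [floor_one_div_cast hu, h1]
  have : (⌊1/u⌋ : ℝ) + (1/u - ⌊1/u⌋) = 1/u := by ring
  rw [this, one_div, inv_inv]

/-! ### Inverse branches -/

/-- Apply the inverse branches determined by a word `w`. -/
noncomputable def F (w : List ℕ) (t : ℝ) : ℝ := w.foldr (fun a s => ((a:ℝ) + s)⁻¹) t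

@[simp] lemma F_nil (t : ℝ) : F [] t = t := rfl

@[simp] lemma F_cons (a : ℕ) (w : List ℕ) (t : ℝ) :
    F (a :: w) t = ((a:ℝ) + F w t)⁻¹ := rfl

lemma F_concat (w : List ℕ) (a : ℕ) (t : ℝ) :
    F (w ++ [a]) t = F w (((a:ℝ) + t)⁻¹) := by
  simp [F, List.foldr_append]

lemma br_mem {a : ℕ} (ha : 1 ≤ a) {t : ℝ} (ht : t ∈ Set.Ioo (0:ℝ) 1) :
    ((a:ℝ) + t)⁻¹ ∈ Set.Ioo (0:ℝ) 1 := by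
  have h1 : (1:ℝ) ≤ (a:ℝ) := by exact_mod_cast ha
  have hpos : (0:ℝ) < (a:ℝ) + t := by linarith [ht.1]
  constructor
  · positivity
  · rw [inv_lt_one_iff₀]; right; linarith [ht.1]

lemma F_mem {w : List ℕ} (hw : ∀ a ∈ w, 1 ≤ a) {t : ℝ} (ht : t ∈ Set.Ioo (0:ℝ) 1) :
    F w t ∈ Set.Ioo (0:ℝ) 1 := by
  induction w with
  | nil => exact ht
  | cons a w ih =>
    rw [F_cons]
    exact br_mem (hw a (by simp)) (ih fun b hb => hw b (by simp [hb]))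

lemma F_irrational {w : List ℕ} {t : ℝ} (ht : Irrational t) : Irrational (F w t) := by
  induction w with
  | nil => exact ht
  | cons a w ih =>
    rw [F_cons]
    exact (ih.natCast_add a).inv

lemma gaussMap_br {a : ℕ} (ha : 1 ≤ a) {t : ℝ} (ht : t ∈ Set.Ioo (0:ℝ) 1) :
    gaussMap (((a:ℝ) + t)⁻¹) = t := by
  have hmem := br_mem ha ht
  have hne : ((a:ℝ) + t)⁻¹ ≠ 0 := ne_of_gt hmem.1
  have hpos : (0:ℝ) < (a:ℝ) + t := by
    have : (1:ℝ) ≤ (a:ℝ) := by exact_mod_cast ha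
    linarith [ht.1]
  have h1 : 1 / ((a:ℝ) + t)⁻¹ = (a:ℝ) + t := by
    rw [one_div, inv_inv]
  have hfl : ⌊(a:ℝ) + t⌋ = (a : ℤ) := by
    rw [Int.floor_eq_iff]
    constructor
    · push_cast; linarith [ht.1]
    · push_cast; linarith [ht.2]
  simp only [gaussMap, hne, if_false, h1, hfl]
  push_cast; ring

lemma gaussMap_iterate_F {w : List ℕ} (hw : ∀ a ∈ w, 1 ≤ a) {t : ℝ}
    (ht : t ∈ Set.Ioo (0:ℝ) 1) : gaussMap^[w.length] (F w t) = t := by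
  induction w with
  | nil => simp
  | cons a w ih =>
    have hw' : ∀ b ∈ w, 1 ≤ b := fun b hb => hw b (by simp [hb])
    have hmem : F w t ∈ Set.Ioo (0:ℝ) 1 := F_mem hw' ht
    rw [List.length_cons, Function.iterate_succ_apply, F_cons,
      gaussMap_br (hw a (by simp)) hmem]
    exact ih hw'

/-! ### Contraction -/

lemma one_step_est (a : ℕ) (ha : 1 ≤ a) {s t : ℝ} (hs : s ∈ Set.Ioo (0:ℝ) 1)
    (ht : t ∈ Set.Ioo (0:ℝ) 1) :
    |((a:ℝ) + s)⁻¹ - ((a:ℝ) + t)⁻¹| ≤ |s - t| := by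
  have ha' : (1:ℝ) ≤ (a:ℝ) := by exact_mod_cast ha
  have hs0 : (0:ℝ) < (a:ℝ) + s := by linarith [hs.1]
  have ht0 : (0:ℝ) < (a:ℝ) + t := by linarith [ht.1]
  have key : ((a:ℝ) + s)⁻¹ - ((a:ℝ) + t)⁻¹ = (t - s) / (((a:ℝ) + s) * ((a:ℝ) + t)) := by
    rw [inv_sub_inv (ne_of_gt hs0) (ne_of_gt ht0)]
    rw [div_eq_div_iff (by positivity) (by positivity)]
    ring
  have hden : (0:ℝ) < ((a:ℝ) + s) * ((a:ℝ) + t) := by positivity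
  rw [key, abs_div, abs_of_pos hden]
  have h1 : (1:ℝ) ≤ ((a:ℝ) + s) * ((a:ℝ) + t) := by nlinarith [hs.1, ht.1]
  calc |t - s| / (((a:ℝ) + s) * ((a:ℝ) + t)) ≤ |t - s| / 1 := by gcongr
    _ = |s - t| := by rw [div_one, abs_sub_comm]

lemma two_step_est (a b : ℕ) (ha : 1 ≤ a) (hb : 1 ≤ b) {u v : ℝ}
    (hu : u ∈ Set.Ioo (0:ℝ) 1) (hv : v ∈ Set.Ioo (0:ℝ) 1) :
    |((a:ℝ) + ((b:ℝ) + u)⁻¹)⁻¹ - ((a:ℝ) + ((b:ℝ) + v)⁻¹)⁻¹| ≤ |u - v| / 4 := by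
  have ha' : (1:ℝ) ≤ (a:ℝ) := by exact_mod_cast ha
  have hb' : (1:ℝ) ≤ (b:ℝ) := by exact_mod_cast hb
  have hbu : (0:ℝ) < (b:ℝ) + u := by linarith [hu.1]
  have hbv : (0:ℝ) < (b:ℝ) + v := by linarith [hv.1]
  have hau : (0:ℝ) < (a:ℝ) + ((b:ℝ) + u)⁻¹ := by positivity
  have hav : (0:ℝ) < (a:ℝ) + ((b:ℝ) + v)⁻¹ := by positivity
  have hA : (2:ℝ) ≤ (a:ℝ) * ((b:ℝ) + u) + 1 := by nlinarith [hu.1]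
  have hB : (2:ℝ) ≤ (a:ℝ) * ((b:ℝ) + v) + 1 := by nlinarith [hv.1]
  have hA0 : (0:ℝ) < (a:ℝ) * ((b:ℝ) + u) + 1 := by linarith
  have hB0 : (0:ℝ) < (a:ℝ) * ((b:ℝ) + v) + 1 := by linarith
  have key : ((a:ℝ) + ((b:ℝ) + u)⁻¹)⁻¹ - ((a:ℝ) + ((b:ℝ) + v)⁻¹)⁻¹ =
      (u - v) / (((a:ℝ) * ((b:ℝ) + u) + 1) * ((a:ℝ) * ((b:ℝ) + v) + 1)) := by
    rw [inv_sub_inv (ne_of_gt hau) (ne_of_gt hav)]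
    rw [div_eq_div_iff (by positivity) (by positivity)]
    field_simp
    ring
  have hden : (0:ℝ) < ((a:ℝ) * ((b:ℝ) + u) + 1) * ((a:ℝ) * ((b:ℝ) + v) + 1) := by positivity
  rw [key, abs_div, abs_of_pos hden]
  have h4 : (4:ℝ) ≤ ((a:ℝ) * ((b:ℝ) + u) + 1) * ((a:ℝ) * ((b:ℝ) + v) + 1) := by nlinarith
  calc |u - v| / (((a:ℝ) * ((b:ℝ) + u) + 1) * ((a:ℝ) * ((b:ℝ) + v) + 1))
      ≤ |u - v| / 4 := by gcongr

lemma contract_aux (n : ℕ) : ∀ (w : List ℕ), w.length ≤ n → (∀ a ∈ w, 1 ≤ a) →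
    ∀ s t : ℝ, s ∈ Set.Ioo (0:ℝ) 1 → t ∈ Set.Ioo (0:ℝ) 1 →
    |F w s - F w t| ≤ 2 * (2:ℝ)⁻¹ ^ w.length := by
  induction n with
  | zero =>
    intro w hw _ s t hs ht
    obtain ⟨hs1, hs2⟩ := hs
    obtain ⟨ht1, ht2⟩ := ht
    have h : w = [] := List.length_eq_zero_iff.mp (Nat.le_zero.mp hw)
    subst h
    simp only [F_nil, List.length_nil, pow_zero, mul_one]
    have habs : |s - t| < 1 := abs_sub_lt_iff.mpr ⟨by linarith, by linarith⟩
    linarith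
  | succ n ih =>
    intro w hw hpos s t hs ht
    match w with
    | [] =>
      obtain ⟨hs1, hs2⟩ := hs
      obtain ⟨ht1, ht2⟩ := ht
      simp only [F_nil, List.length_nil, pow_zero, mul_one]
      have habs : |s - t| < 1 := abs_sub_lt_iff.mpr ⟨by linarith, by linarith⟩
      linarith
    | [a] =>
      have h1 := one_step_est a (hpos a (by simp)) hs ht
      obtain ⟨hs1, hs2⟩ := hs
      obtain ⟨ht1, ht2⟩ := ht
      simp only [F_cons, F_nil, List.length_cons, List.length_nil, zero_add, pow_one]
      have h2 : |s - t| ≤ 1 :=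
        le_of_lt (abs_sub_lt_iff.mpr ⟨by linarith, by linarith⟩)
      calc |((a:ℝ) + s)⁻¹ - ((a:ℝ) + t)⁻¹| ≤ |s - t| := h1
        _ ≤ 1 := h2
        _ ≤ 2 * (2:ℝ)⁻¹ := by norm_num
    | a :: b :: w' =>
      have hw' : ∀ c ∈ w', 1 ≤ c := fun c hc => hpos c (by simp [hc])
      have hlen : w'.length ≤ n := by
        simp only [List.length_cons] at hw; omega
      have hu : F w' s ∈ Set.Ioo (0:ℝ) 1 := F_mem hw' hs
      have hv : F w' t ∈ Set.Ioo (0:ℝ) 1 := F_mem hw' ht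
      have h2 := two_step_est a b (hpos a (by simp)) (hpos b (by simp)) hu hv
      have hih := ih w' hlen hw' s t hs ht
      have : F (a :: b :: w') s = ((a:ℝ) + ((b:ℝ) + F w' s)⁻¹)⁻¹ := rfl
      rw [this]
      have : F (a :: b :: w') t = ((a:ℝ) + ((b:ℝ) + F w' t)⁻¹)⁻¹ := rfl
      rw [this]
      calc |((a:ℝ) + ((b:ℝ) + F w' s)⁻¹)⁻¹ - ((a:ℝ) + ((b:ℝ) + F w' t)⁻¹)⁻¹|
          ≤ |F w' s - F w' t| / 4 := h2
        _ ≤ (2 * (2:ℝ)⁻¹ ^ w'.length) / 4 := by gcongr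
        _ = 2 * (2:ℝ)⁻¹ ^ (w'.length + 2) := by ring
        _ = 2 * (2:ℝ)⁻¹ ^ (a :: b :: w').length := by
            simp [List.length_cons]

lemma contract {w : List ℕ} (hpos : ∀ a ∈ w, 1 ≤ a) {s t : ℝ}
    (hs : s ∈ Set.Ioo (0:ℝ) 1) (ht : t ∈ Set.Ioo (0:ℝ) 1) :
    |F w s - F w t| ≤ 2 * (2:ℝ)⁻¹ ^ w.length :=
  contract_aux w.length w le_rfl hpos s t hs ht

/-! ### Digit expansion identity -/

lemma F_digits {y : ℝ} (hy : y ∈ Set.Ioo (0:ℝ) 1) (hirr : Irrational y) (m : ℕ) :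
    F (List.ofFn fun i : Fin m => pquot y i) (gaussMap^[m] y) = y := by
  induction m with
  | zero => simp
  | succ m ih =>
    rw [List.ofFn_succ']
    have hcast : (List.ofFn fun i : Fin m => pquot y (i.castSucc : ℕ)) =
        (List.ofFn fun i : Fin m => pquot y i) := rfl
    rw [List.concat_eq_append, hcast, F_concat]
    have hu := orbit_mem hy hirr m
    have key : (((pquot y m : ℕ) : ℝ) + gaussMap^[m+1] y)⁻¹ = gaussMap^[m] y := by
      rw [Function.iterate_succ_apply']
      exact inv_branch hu.1
    simp only [Fin.val_last]
    rw [key]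
    exact ih

/-! ### The approximation lemma -/

lemma approx {y : ℝ} (hy : y ∈ Set.Ioo (0:ℝ) 1) (hyirr : Irrational y)
    {z : ℝ} (hz : z ∈ Set.Ioo (0:ℝ) 1) (hzirr : Irrational z)
    {ε : ℝ} (hε : 0 < ε) :
    ∃ x : ℝ, x ∈ Set.Ioo (0:ℝ) 1 ∧ Irrational x ∧ |x - y| < ε ∧
      ∃ m : ℕ, gaussMap^[m] x = z := by
  obtain ⟨m, hm⟩ := exists_pow_lt_of_lt_one (half_pos hε) (by norm_num : (2:ℝ)⁻¹ < 1)
  set w : List ℕ := List.ofFn fun i : Fin m => pquot y i with hw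
  have hwlen : w.length = m := by simp [hw]
  have hwpos : ∀ a ∈ w, 1 ≤ a := by
    intro a haw
    rw [hw, List.mem_ofFn] at haw
    obtain ⟨i, hi⟩ := haw
    rw [← hi]
    exact pquot_pos hy hyirr i
  refine ⟨F w z, F_mem hwpos hz, F_irrational hzirr, ?_, m, ?_⟩
  · have h1 : F w (gaussMap^[m] y) = y := F_digits hy hyirr m
    have h2 : gaussMap^[m] y ∈ Set.Ioo (0:ℝ) 1 := (orbit_mem hy hyirr m).1
    have h3 := contract hwpos hz h2
    rw [h1, hwlen] at h3
    calc |F w z - y| ≤ 2 * (2:ℝ)⁻¹ ^ m := h3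
      _ < 2 * (ε / 2) := by linarith
      _ = ε := by ring
  · rw [← hwlen]
    exact gaussMap_iterate_F hwpos hz

/-! ### Continuity at irrational points -/

lemma continuousAt_gaussMap {u : ℝ} (hu : u ∈ Set.Ioo (0:ℝ) 1) (hirr : Irrational u) :
    ContinuousAt gaussMap u := by
  have hu0 : u ≠ 0 := ne_of_gt hu.1
  have h1 : ContinuousAt (fun x : ℝ => Int.fract x⁻¹) u := by
    have hni : u⁻¹ ≠ (⌊u⁻¹⌋ : ℝ) := hirr.inv.ne_int _
    exact (continuousAt_fract hni).comp (continuousAt_inv₀ hu0)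
  apply h1.congr
  have : ∀ᶠ x in nhds u, x ≠ 0 := eventually_ne_nhds hu0
  filter_upwards [this] with x hx
  rw [gaussMap_eq_fract hx]

lemma continuousAt_gaussMap_iterate {u : ℝ} (hu : u ∈ Set.Ioo (0:ℝ) 1)
    (hirr : Irrational u) (m : ℕ) : ContinuousAt (gaussMap^[m]) u := by
  induction m with
  | zero => simpa using continuousAt_id
  | succ m ih =>
    have hmem := orbit_mem hu hirr m
    have : ContinuousAt (fun x => gaussMap (gaussMap^[m] x)) u :=
      (continuousAt_gaussMap hmem.1 hmem.2).comp ih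
    apply this.congr
    filter_upwards with x
    rw [Function.iterate_succ_apply']

/-! ### The avoidance sets -/

/-- Points of `(0,1)` that are irrational and whose orbit stays `1/(k+1)`-away from `r`. -/
def Aset (r : ℚ) (k : ℕ) : Set ℝ :=
  {x | x ∈ Set.Ioo (0:ℝ) 1 ∧ Irrational x ∧
    ∀ n : ℕ, 1 / ((k:ℝ) + 1) ≤ |gaussMap^[n] x - (r:ℝ)|}

open scoped Classical in
noncomputable def A' (p : ℚ × ℕ) : Set ℝ :=
  if ∃ z ∈ Set.Ioo (0:ℝ) 1, Irrational z ∧ |z - (p.1:ℝ)| < 1 / ((p.2:ℝ) + 1) then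
    Aset p.1 p.2 else ∅

lemma Aset_nowhereDense (r : ℚ) (k : ℕ)
    (hex : ∃ z ∈ Set.Ioo (0:ℝ) 1, Irrational z ∧ |z - (r:ℝ)| < 1 / ((k:ℝ) + 1)) :
    IsNowhereDense (Aset r k) := by
  obtain ⟨z, hz, hzirr, hzr⟩ := hex
  rw [IsNowhereDense]
  by_contra hne
  obtain ⟨y0, hy0⟩ := Set.nonempty_iff_ne_empty.mpr hne
  obtain ⟨η, hη, hball⟩ := Metric.isOpen_iff.mp isOpen_interior y0 hy0
  have hy0cl : y0 ∈ closure (Aset r k) := interior_subset hy0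
  obtain ⟨y, hyA, hyd⟩ := Metric.mem_closure_iff.mp hy0cl η hη
  obtain ⟨hyIoo, hyirr, hyav⟩ := hyA
  set ε' := η - dist y0 y with hε'
  have hε'pos : 0 < ε' := by rw [hε']; linarith
  obtain ⟨x, hxIoo, hxirr, hxy, m, hxm⟩ := approx hyIoo hyirr hz hzirr hε'pos
  have hxcl : x ∈ closure (Aset r k) := by
    apply interior_subset (s := closure (Aset r k))
    apply hball
    rw [Metric.mem_ball, Real.dist_eq]
    have t1 : |x - y0| ≤ |x - y| + |y - y0| := abs_sub_le x y y0
    have t2 : |y - y0| = dist y0 y := by rw [Real.dist_eq, abs_sub_comm]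
    rw [t2] at t1
    have : ε' + dist y0 y = η := by rw [hε']; ring
    linarith
  -- continuity gives a neighborhood of x disjoint from Aset r k
  have hcont : ContinuousAt (fun u => |gaussMap^[m] u - (r:ℝ)|) x :=
    ((continuousAt_gaussMap_iterate hxIoo hxirr m).sub continuousAt_const).abs
  have hlt : |gaussMap^[m] x - (r:ℝ)| < 1 / ((k:ℝ) + 1) := by rw [hxm]; exact hzr
  have hU : {u : ℝ | |gaussMap^[m] u - (r:ℝ)| < 1 / ((k:ℝ) + 1)} ∈ nhds x :=
    hcont (Iio_mem_nhds hlt)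
  obtain ⟨u, huU, huA⟩ := mem_closure_iff_nhds.mp hxcl _ hU
  exact absurd (huA.2.2 m) (not_le.mpr huU)

lemma A'_isMeagre (p : ℚ × ℕ) : IsMeagre (A' p) := by
  classical
  rw [A']
  split_ifs with h
  · rw [isMeagre_iff_countable_union_isNowhereDense]
    exact ⟨{Aset p.1 p.2}, by simpa using Aset_nowhereDense p.1 p.2 h,
      Set.countable_singleton _, by simp⟩
  · exact IsMeagre.empty

/-! ### Covering Dcset -/

lemma Dcset_subset :
    Dcset ⊆ {x : ℝ | ¬ Irrational x} ∪ ⋃ p : ℚ × ℕ, A' p := by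
  classical
  rintro x ⟨hx01, hnd⟩
  by_cases hxirr : Irrational x
  · right
    rw [gaussOrbitDense, Set.not_subset] at hnd
    obtain ⟨c, hc, hcnot⟩ := hnd
    rw [Metric.mem_closure_iff] at hcnot
    push_neg at hcnot
    obtain ⟨ε, hε, havoid⟩ := hcnot
    -- find an irrational z0 in (c-ε,c+ε) ∩ (0,1)
    have hlt : max (c - ε) 0 < min (c + ε) 1 := by
      rcases hc with ⟨hc0, hc1⟩
      rcases max_cases (c - ε) 0 with ⟨hm, -⟩ | ⟨hm, -⟩ <;>
        rcases min_cases (c + ε) 1 with ⟨hn, -⟩ | ⟨hn, -⟩ <;>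
        rw [hm, hn] <;> linarith
    obtain ⟨z0, hz0irr, hz0l, hz0r⟩ := exists_irrational_btwn hlt
    have hz0Ioo : z0 ∈ Set.Ioo (0:ℝ) 1 :=
      ⟨lt_of_le_of_lt (le_max_right _ _) hz0l, lt_of_lt_of_le hz0r (min_le_right _ _)⟩
    have hz0c : |z0 - c| < ε := by
      rw [abs_sub_lt_iff]
      constructor
      · have := lt_of_lt_of_le hz0r (min_le_left _ _); linarith
      · have := lt_of_le_of_lt (le_max_left _ _) hz0l; linarith
    set δ := ε - |z0 - c| with hδ
    have hδpos : 0 < δ := by rw [hδ]; linarith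
    obtain ⟨k, hk⟩ := exists_nat_one_div_lt (half_pos hδpos)
    obtain ⟨r, hr1, hr2⟩ := exists_rat_btwn (show z0 - 1 / ((k:ℝ) + 1) < z0 by
      have : (0:ℝ) < 1 / ((k:ℝ) + 1) := by positivity
      linarith)
    have hz0r' : |z0 - (r:ℝ)| < 1 / ((k:ℝ) + 1) := by
      have hp : (0:ℝ) < 1 / ((k:ℝ) + 1) := by positivity
      rw [abs_sub_lt_iff]
      exact ⟨by linarith, by linarith⟩
    have hexists : ∃ z ∈ Set.Ioo (0:ℝ) 1, Irrational z ∧ |z - (r:ℝ)| < 1 / ((k:ℝ) + 1) :=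
      ⟨z0, hz0Ioo, hz0irr, hz0r'⟩
    refine Set.mem_iUnion.mpr ⟨(r, k), ?_⟩
    rw [A', if_pos hexists]
    have hxIoo : x ∈ Set.Ioo (0:ℝ) 1 := ⟨(hx01.1.lt_of_ne (Ne.symm hxirr.ne_zero)), hx01.2⟩
    refine ⟨hxIoo, hxirr, fun n => ?_⟩
    have h1 : ε ≤ dist c (gaussMap^[n] x) :=
      havoid (gaussMap^[n] x) ⟨n, rfl⟩
    rw [Real.dist_eq] at h1
    have h2 : |c - gaussMap^[n] x| ≤ |c - z0| + |z0 - (r:ℝ)| + |(r:ℝ) - gaussMap^[n] x| := by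
      calc |c - gaussMap^[n] x| ≤ |c - (r:ℝ)| + |(r:ℝ) - gaussMap^[n] x| := abs_sub_le _ _ _
        _ ≤ (|c - z0| + |z0 - (r:ℝ)|) + |(r:ℝ) - gaussMap^[n] x| := by
            have := abs_sub_le c z0 (r:ℝ); linarith
    have h3 : |c - z0| = |z0 - c| := abs_sub_comm _ _
    have h4 : |(r:ℝ) - gaussMap^[n] x| = |gaussMap^[n] x - (r:ℝ)| := abs_sub_comm _ _
    have hk' : 1 / ((k:ℝ) + 1) < δ / 2 := hk
    rw [h3, h4] at h2
    linarith
  · left; exact hxirr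

end GaussAux


/-- The set of points of `[0,1)` with non-dense Gauss orbit is meager. -/
theorem Dcset_meagre : IsMeagre Dcset := by
  have h1 : IsMeagre {x : ℝ | ¬ Irrational x} := by
    rw [IsMeagre]
    have hc : {x : ℝ | ¬ Irrational x}ᶜ = {x : ℝ | Irrational x} := by ext x; simp
    rw [hc]
    exact eventually_residual_irrational
  have h2 : IsMeagre (⋃ p : ℚ × ℕ, GaussAux.A' p) := by
    let e : ℕ ≃ ℚ × ℕ := (Denumerable.eqv (ℚ × ℕ)).symm
    have he : (⋃ p : ℚ × ℕ, GaussAux.A' p) = ⋃ n : ℕ, GaussAux.A' (e n) :=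
      (e.surjective.iUnion_comp fun p => GaussAux.A' p).symm
    rw [he]
    exact isMeagre_iUnion fun n => GaussAux.A'_isMeagre (e n)
  have h3 : IsMeagre ({x : ℝ | ¬ Irrational x} ∪ ⋃ p : ℚ × ℕ, GaussAux.A' p) := by
    have : ({x : ℝ | ¬ Irrational x} ∪ ⋃ p : ℚ × ℕ, GaussAux.A' p) ⊆
        ⋃ n : ℕ, (if n = 0 then {x : ℝ | ¬ Irrational x} else ⋃ p : ℚ × ℕ, GaussAux.A' p) := by
      rintro x (hx | hx)
      · exact Set.mem_iUnion.mpr ⟨0, by simpa using hx⟩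
      · exact Set.mem_iUnion.mpr ⟨1, by simpa using hx⟩
    refine IsMeagre.mono this (isMeagre_iUnion fun n => ?_)
    split_ifs
    · exact h1
    · exact h2
  exact h3.mono GaussAux.Dcset_subset
end

section
/- Let Σ_N = {1,...,N}^ℕ with metric d(x,y) = 2^{-i} where i = inf{j ≥ 0 : x_{j+1} ≠ y_{j+1}}. The map Δ_N : Σ_N → Σ_N constructed by interleaving x with Θ_N(g_N(x)) along the index set R = ∪_m {m^3 + t : 1 ≤ t ≤ m} is continuous and injective. -/
open MeasureTheory Filter Set

section DeltaNAux

lemma tcount_le' (n : ℕ) : tcount n ≤ n := by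
  calc tcount n ≤ (Finset.Icc 1 n).card := Finset.card_filter_le _ _
  _ = n := by rw [Nat.card_Icc]; omega

lemma tcount_succ' (n : ℕ) :
    tcount (n+1) = tcount n + (if inR (n+1) then 1 else 0) := by
  unfold tcount
  have h : Finset.Icc 1 (n+1) = insert (n+1) (Finset.Icc 1 n) := by
    ext a; simp only [Finset.mem_Icc, Finset.mem_insert]; omega
  rw [h, Finset.filter_insert]
  split
  · rw [Finset.card_insert_of_notMem]
    simp only [Finset.mem_filter, Finset.mem_Icc]
    omega
  · simp

lemma one_le_tcount' {n : ℕ} (h : inR n) : 1 ≤ tcount n := by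
  have hn : 1 ≤ n := by
    obtain ⟨m, h1, h2, h3⟩ := h
    have : 1 ≤ m^3 := Nat.one_le_pow _ _ h1
    omega
  have hm : n ∈ (Finset.Icc 1 n).filter inR := by
    simp only [Finset.mem_filter, Finset.mem_Icc]
    exact ⟨⟨hn, le_refl n⟩, h⟩
  exact Finset.card_pos.mpr ⟨n, hm⟩

lemma not_inR_cube (m : ℕ) : ¬ inR ((m+1)^3) := by
  rintro ⟨k, hk1, hk2, hk3⟩
  have hkm : k < m+1 := by
    by_contra h
    push_neg at h
    have : (m+1)^3 ≤ k^3 := Nat.pow_le_pow_left h 3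
    omega
  have h2 : (k+1)^3 ≤ (m+1)^3 := Nat.pow_le_pow_left hkm 3
  nlinarith [sq_nonneg k]

/-- every index `j` is hit by some non-`R` position. -/
lemma surjR (j : ℕ) : ∃ n, ¬ inR n ∧ n - tcount n = j + 1 := by
  induction j with
  | zero =>
    refine ⟨1, ?_, ?_⟩
    · rintro ⟨m, h1, h2, h3⟩
      have : 1 ≤ m^3 := Nat.one_le_pow _ _ h1
      omega
    · have h1 : tcount 1 = 0 := by
        rw [tcount]
        have : ¬ inR 1 := by
          rintro ⟨m, h1, h2, h3⟩
          have : 1 ≤ m^3 := Nat.one_le_pow _ _ h1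
          omega
        simp [Finset.Icc_self, Finset.filter_singleton, this]
      omega
  | succ j ih =>
    obtain ⟨n, hn, hc⟩ := ih
    have hex : ∃ e, ¬ inR (n + e + 1) := by
      refine ⟨(n+1)^3 - n - 1, ?_⟩
      have h1 : n + 1 ≤ (n+1)^3 := Nat.le_self_pow (by norm_num) _
      have h2 : n + ((n+1)^3 - n - 1) + 1 = (n+1)^3 := by
        have h3 : (n+1) < (n+1)^3 ∨ (n+1) = (n+1)^3 := by
          rcases lt_or_eq_of_le h1 with h | h
          · exact Or.inl h
          · exact Or.inr h
        omega
      rw [h2]; exact not_inR_cube n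
    set E := Nat.find hex with hE
    have hkey : ∀ f, f ≤ E → (n + f) - tcount (n + f) = j + 1 := by
      intro f
      induction f with
      | zero => intro _; simpa using hc
      | succ f ihf =>
        intro hf
        have hRf : inR (n + f + 1) := by
          have := Nat.find_min hex (m := f) (by omega)
          simpa using this
        have h1 := tcount_succ' (n + f)
        rw [if_pos hRf] at h1
        have h2 := ihf (by omega)
        have h3 := tcount_le' (n + f)
        have h4 := one_le_tcount' hRf
        have e1 : tcount (n + (f+1)) = tcount (n + f + 1) := rfl
        omega
    refine ⟨n + E + 1, Nat.find_spec hex, ?_⟩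
    have h1 := tcount_succ' (n + E)
    rw [if_neg (Nat.find_spec hex)] at h1
    have h2 := hkey E le_rfl
    have h3 := tcount_le' (n + E)
    omega

lemma gN_local (N : ℕ) {x y : ℕ → ℕ} {i m : ℕ} (h : ∀ j ≤ i, x j = y j)
    (hm : m ≤ i + 1) : gN N x m = gN N y m := by
  unfold gN
  split
  · rfl
  · next hm0 =>
    simp only
    split
    · rfl
    · apply h
      exact le_trans (le_trans (Nat.sub_le _ _) (Nat.sub_le _ _)) (by omega)

/-- `deltaN N x i` only depends on `x 0, …, x i`. -/
lemma deltaN_local (N : ℕ) {x y : ℕ → ℕ} {i : ℕ} (h : ∀ j ≤ i, x j = y j) :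
    deltaN N x i = deltaN N y i := by
  unfold deltaN psiN
  simp only
  split
  · next hR =>
    have ht : tcount (i+1) - 1 ≤ i := by
      have := tcount_le' (i+1); have := one_le_tcount' hR; omega
    unfold thetaN
    simp only
    apply gN_local N h
    exact le_trans (le_trans (Nat.sub_le _ _) ht) (by omega)
  · apply h
    have := tcount_le' (i+1)
    omega

lemma agree_of_dseq_lt {x y : ℕ → ℕ} {e : ℕ} (h : dseq x y < (2:ℝ)⁻¹ ^ e) :
    ∀ j ≤ e, x j = y j := by
  intro j hj
  by_contra hne
  have hex : ∃ k, x k ≠ y k := ⟨j, hne⟩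
  rw [dseq, dif_pos hex] at h
  have hk : Nat.find hex ≤ e := le_trans (Nat.find_le hne) hj
  have hle : (2:ℝ)⁻¹ ^ e ≤ (2:ℝ)⁻¹ ^ Nat.find hex :=
    pow_le_pow_of_le_one (by norm_num) (by norm_num) hk
  linarith

lemma dseq_lt_of_agree {x y : ℕ → ℕ} {e : ℕ} (h : ∀ j ≤ e, x j = y j) :
    dseq x y < (2:ℝ)⁻¹ ^ e := by
  rw [dseq]
  split
  · next hex =>
    have hlt : e < Nat.find hex := by
      by_contra hle
      push_neg at hle
      exact Nat.find_spec hex (h _ hle)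
    exact pow_lt_pow_right_of_lt_one₀ (by norm_num) (by norm_num) hlt
  · positivity

end DeltaNAux

/-- `Δ_N : Σ_N → Σ_N` is continuous and injective. -/
theorem deltaN_continuous_injective (N : ℕ) (hN : 2 ≤ N) :
    Set.InjOn (deltaN N) (SigmaN N) ∧
    ∀ x ∈ SigmaN N, ∀ ε > (0:ℝ), ∃ δ > (0:ℝ), ∀ y ∈ SigmaN N,
      dseq x y < δ → dseq (deltaN N x) (deltaN N y) < ε := by
  constructor
  · intro x _ y _ hxy
    funext j
    obtain ⟨n, hn, hc⟩ := surjR j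
    have hn1 : 1 ≤ n := by have := tcount_le' n; omega
    have hthis := congrFun hxy (n-1)
    unfold deltaN psiN at hthis
    simp only at hthis
    rw [show n - 1 + 1 = n by omega, if_neg hn, if_neg hn,
      show n - tcount n - 1 = j by omega] at hthis
    exact hthis
  · intro x _ ε hε
    obtain ⟨e, he⟩ := exists_pow_lt_of_lt_one hε (by norm_num : (2:ℝ)⁻¹ < 1)
    refine ⟨(2:ℝ)⁻¹ ^ e, pow_pos (by norm_num) e, fun y _ hd => ?_⟩
    have hag := agree_of_dseq_lt hd
    have hag2 : ∀ i ≤ e, deltaN N x i = deltaN N y i := fun i hi =>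
      deltaN_local N (fun j hj => hag j (le_trans hj hi))
    exact lt_trans (dseq_lt_of_agree hag2) he
end

section
/- Let b = [b_1,b_2,...] and c = [c_1,c_2,...] be distinct irrationals in [0,1) whose partial quotients are all at most N, with b_i = c_i for i ≤ n and b_{n+1} ≠ c_{n+1}. Then |b - c| ≥ λ^{-2} |I(N+1)|^2 |I(b_1,...,b_n)|, where λ is the quasi-multiplicativity constant of cylinder lengths and I(·) denotes continued fraction cylinders with |·| Lebesgue measure. -/
open MeasureTheory Filter Set

namespace CFSep

def Pp (w : List ℕ) : ℕ × ℕ := w.foldl cdStep (0,1)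
def Qq (w : List ℕ) : ℕ × ℕ := w.foldl cdStep (1,0)

lemma foldl_lin (w : List ℕ) (a : ℕ) (s t : ℕ × ℕ) :
    w.foldl cdStep (a*s.1 + t.1, a*s.2 + t.2)
      = (a*(w.foldl cdStep s).1 + (w.foldl cdStep t).1,
         a*(w.foldl cdStep s).2 + (w.foldl cdStep t).2) := by
  induction w generalizing s t with
  | nil => simp
  | cons d w ih =>
      simp only [List.foldl_cons]
      have h : cdStep (a*s.1+t.1, a*s.2+t.2) d
          = (a*(cdStep s d).1 + (cdStep t d).1, a*(cdStep s d).2 + (cdStep t d).2) := by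
        simp [cdStep]; ring
      rw [h, ih]

lemma Pp_cons (d : ℕ) (w : List ℕ) : Pp (d :: w) = Qq w := by
  simp [Pp, Qq, cdStep]

lemma Qq_cons (d : ℕ) (w : List ℕ) :
    Qq (d :: w) = (d*(Qq w).1 + (Pp w).1, d*(Qq w).2 + (Pp w).2) := by
  have h : cdStep (1,0) d = (d*(1:ℕ)+0, d*0+1) := by simp [cdStep]
  simp only [Qq, Pp, List.foldl_cons, h]
  exact foldl_lin w d (1,0) (0,1)

lemma Pp_append (w : List ℕ) (k : ℕ) :
    Pp (w ++ [k]) = (k*(Pp w).1 + (Pp w).2, (Pp w).1) := by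
  simp [Pp, List.foldl_append, cdStep]

lemma Qq_append (w : List ℕ) (k : ℕ) :
    Qq (w ++ [k]) = (k*(Qq w).1 + (Qq w).2, (Qq w).1) := by
  simp [Qq, List.foldl_append, cdStep]

def digitsOK (w : List ℕ) : Prop := ∀ a ∈ w, 1 ≤ a

lemma Qq1_pos (w : List ℕ) (hw : digitsOK w) : 1 ≤ (Qq w).1 := by
  suffices h : ∀ (w : List ℕ), (∀ a ∈ w, 1 ≤ a) → ∀ s : ℕ × ℕ, 1 ≤ s.1 →
      1 ≤ (w.foldl cdStep s).1 by exact h w hw (1,0) le_rfl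
  intro w
  induction w with
  | nil => intro _ s hs; simpa using hs
  | cons d w ih =>
      intro hd s hs
      simp only [List.foldl_cons]
      refine ih (fun a ha => hd a (List.mem_cons_of_mem _ ha)) _ ?_
      have hd1 : 1 ≤ d := hd d (List.mem_cons_self)
      simp only [cdStep]
      calc 1 ≤ s.1 := hs
        _ ≤ d * s.1 + s.2 := by nlinarith

lemma PQ_le (w : List ℕ) (hw : digitsOK w) :
    (Pp w).1 ≤ (Qq w).1 ∧ (Pp w).1 + (Pp w).2 ≤ (Qq w).1 + (Qq w).2 := by
  suffices h : ∀ (w : List ℕ), (∀ a ∈ w, 1 ≤ a) → ∀ s t : ℕ × ℕ,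
      s.1 ≤ t.1 → s.1 + s.2 ≤ t.1 + t.2 →
      (w.foldl cdStep s).1 ≤ (w.foldl cdStep t).1 ∧
      (w.foldl cdStep s).1 + (w.foldl cdStep s).2 ≤ (w.foldl cdStep t).1 + (w.foldl cdStep t).2 by
    exact h w hw (0,1) (1,0) (by norm_num) (by norm_num)
  intro w
  induction w with
  | nil => intro _ s t h1 h2; simpa using ⟨h1, h2⟩
  | cons d w ih =>
      intro hd s t h1 h2
      simp only [List.foldl_cons]
      have hd1 : 1 ≤ d := hd d (List.mem_cons_self)
      refine ih (fun a ha => hd a (List.mem_cons_of_mem _ ha)) _ _ ?_ ?_ <;>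
        simp only [cdStep] <;> nlinarith

/-- determinant -/
def Dt (w : List ℕ) : ℤ := ((Pp w).1 : ℤ) * (Qq w).2 - ((Pp w).2 : ℤ) * (Qq w).1

lemma Dt_cons (d : ℕ) (w : List ℕ) : Dt (d :: w) = - Dt w := by
  simp only [Dt, Pp_cons, Qq_cons]
  push_cast
  ring

lemma Dt_pm (w : List ℕ) : Dt w = 1 ∨ Dt w = -1 := by
  induction w with
  | nil => right; simp [Dt, Pp, Qq]
  | cons d w ih => rcases ih with h | h <;> simp [Dt_cons, h]

end CFSep
namespace CFSep

lemma pquot_succ (x : ℝ) (i : ℕ) : pquot x (i+1) = pquot (gaussMap x) i := by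
  simp [pquot, Function.iterate_succ_apply]

lemma mem_cyl_cons {d : ℕ} (hd : 1 ≤ d) (w : List ℕ) (x : ℝ) :
    x ∈ cyl (d :: w) ↔
      0 < x ∧ x < 1 ∧ (d : ℝ) ≤ 1/x ∧ 1/x < d + 1 ∧ (1/x - d) ∈ cyl w := by
  constructor
  · rintro ⟨⟨hx0, hx1⟩, hdig⟩
    have h0 : pquot x 0 = d := by
      have := hdig 0 (by simp)
      simpa using this
    have hxne : x ≠ 0 := by
      intro h
      rw [h] at h0
      simp [pquot, gaussMap] at h0
      omega
    have hxpos : 0 < x := lt_of_le_of_ne hx0 (Ne.symm hxne)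
    have hixpos : 0 < 1/x := by positivity
    have hfl : ⌊1/x⌋ = (d : ℤ) := by
      have h1 : (0:ℤ) ≤ ⌊1/x⌋ := Int.floor_nonneg.mpr (le_of_lt hixpos)
      have h2 : (⌊1/x⌋).toNat = d := by simpa [pquot] using h0
      omega
    have hge : (d : ℝ) ≤ 1/x := by
      have := Int.floor_le (1/x)
      rw [hfl] at this; exact_mod_cast this
    have hlt : 1/x < d + 1 := by
      have := Int.lt_floor_add_one (1/x)
      rw [hfl] at this; exact_mod_cast this
    have hg : gaussMap x = 1/x - d := by
      simp only [gaussMap, if_neg hxne, hfl]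
      norm_num
    refine ⟨hxpos, hx1, hge, hlt, ?_⟩
    rw [← hg]
    refine ⟨⟨by linarith [hg ▸ (by linarith : (0:ℝ) ≤ 1/x - d)], by rw [hg]; linarith⟩, ?_⟩
    intro i hi
    have := hdig (i+1) (by simpa using Nat.succ_lt_succ hi)
    rw [pquot_succ] at this
    simpa using this
  · rintro ⟨hxpos, hx1, hge, hlt, hmem⟩
    have hxne : x ≠ 0 := ne_of_gt hxpos
    have hfl : ⌊1/x⌋ = (d : ℤ) := by
      rw [Int.floor_eq_iff]
      constructor
      · push_cast; exact hge
      · push_cast; exact hlt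
    have hg : gaussMap x = 1/x - d := by
      simp only [gaussMap, if_neg hxne, hfl]
      norm_num
    refine ⟨⟨le_of_lt hxpos, hx1⟩, ?_⟩
    intro i hi
    match i with
    | 0 => simp [pquot, one_div] at hfl ⊢; simp [hfl]
    | Nat.succ j =>
        rw [pquot_succ, hg]
        have hj : j < w.length := by simpa using hi
        simpa using hmem.2 j hj

lemma cyl_nil : cyl [] = Set.Ico (0:ℝ) 1 := by
  ext x; simp [cyl]

lemma cyl_append_subset (u v : List ℕ) : cyl (u ++ v) ⊆ cyl u := by
  rintro x ⟨hx, hdig⟩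
  refine ⟨hx, fun i hi => ?_⟩
  have h1 : i < (u ++ v).length := by simp; omega
  have := hdig i h1
  rwa [List.getD_append _ _ _ _ hi] at this

end CFSep
namespace CFSep

noncomputable def xval (w : List ℕ) : ℝ := ((Pp w).1 : ℝ) / ((Qq w).1 : ℝ)
noncomputable def yval (w : List ℕ) : ℝ :=
  (((Pp w).1 : ℝ) + ((Pp w).2 : ℝ)) / (((Qq w).1 : ℝ) + ((Qq w).2 : ℝ))
noncomputable def Ept (w : List ℕ) (k : ℕ) : ℝ :=
  ((k : ℝ) * ((Pp w).1 : ℝ) + ((Pp w).2 : ℝ)) / ((k : ℝ) * ((Qq w).1 : ℝ) + ((Qq w).2 : ℝ))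

lemma Qq1_pos' (w : List ℕ) (hw : digitsOK w) : (0:ℝ) < ((Qq w).1 : ℝ) := by
  exact_mod_cast Qq1_pos w hw

lemma phi_eq (dd P Q : ℝ) (hQ : 0 < Q) (hP : 0 ≤ P) (hdd : 1 ≤ dd) :
    Q / (dd*Q + P) = 1 / (dd + P/Q) := by
  have h1 : 0 < dd*Q + P := by nlinarith
  have h2 : 0 < dd + P/Q := by positivity
  rw [div_eq_div_iff h1.ne' h2.ne']
  field_simp

lemma xval_cons (d : ℕ) (hd : 1 ≤ d) (w : List ℕ) (hw : digitsOK w) :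
    xval (d :: w) = 1 / ((d:ℝ) + xval w) := by
  have hq := Qq1_pos' w hw
  simp only [xval, Pp_cons, Qq_cons]
  push_cast
  exact phi_eq _ _ _ hq (by positivity) (by exact_mod_cast hd)

lemma yval_cons (d : ℕ) (hd : 1 ≤ d) (w : List ℕ) (hw : digitsOK w) :
    yval (d :: w) = 1 / ((d:ℝ) + yval w) := by
  have hq := Qq1_pos' w hw
  have hq2 : (0:ℝ) ≤ ((Qq w).2 : ℝ) := by positivity
  simp only [yval, Pp_cons, Qq_cons]
  push_cast
  have h : (0:ℝ) < ((Qq w).1 : ℝ) + ((Qq w).2 : ℝ) := by linarith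
  have := phi_eq (d:ℝ) (((Pp w).1 : ℝ) + ((Pp w).2 : ℝ)) (((Qq w).1 : ℝ) + ((Qq w).2 : ℝ))
    h (by positivity) (by exact_mod_cast hd)
  rw [← this]
  ring_nf

lemma xval_mem (w : List ℕ) (hw : digitsOK w) : xval w ∈ Set.Icc (0:ℝ) 1 := by
  have hq := Qq1_pos' w hw
  have h := (PQ_le w hw).1
  rw [Set.mem_Icc, xval]
  constructor
  · positivity
  · rw [div_le_one hq]; exact_mod_cast h

lemma yval_mem (w : List ℕ) (hw : digitsOK w) : yval w ∈ Set.Icc (0:ℝ) 1 := by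
  have hq := Qq1_pos' w hw
  have hq2 : (0:ℝ) ≤ ((Qq w).2 : ℝ) := by positivity
  have h := (PQ_le w hw).2
  have hden : (0:ℝ) < ((Qq w).1 : ℝ) + ((Qq w).2 : ℝ) := by linarith
  rw [Set.mem_Icc, yval]
  constructor
  · positivity
  · rw [div_le_one hden]; exact_mod_cast h

lemma digitsOK_cons {d : ℕ} {w : List ℕ} (hd : 1 ≤ d) (hw : digitsOK w) :
    digitsOK (d :: w) := by
  intro a ha
  rcases List.mem_cons.mp ha with h | h
  · omega
  · exact hw a h

lemma digitsOK_tail {d : ℕ} {w : List ℕ} (h : digitsOK (d :: w)) :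
    1 ≤ d ∧ digitsOK w :=
  ⟨h d (List.mem_cons_self), fun a ha => h a (List.mem_cons_of_mem _ ha)⟩

lemma cyl_sandwich (w : List ℕ) (hw : digitsOK w) :
    Set.Ioo (min (xval w) (yval w)) (max (xval w) (yval w)) ⊆ cyl w ∧
    cyl w ⊆ Set.Icc (min (xval w) (yval w)) (max (xval w) (yval w)) := by
  induction w with
  | nil =>
      have hx : xval [] = 0 := by simp [xval, Pp, Qq, cdStep]
      have hy : yval [] = 1 := by norm_num [yval, Pp, Qq, cdStep]
      rw [hx, hy, cyl_nil]
      rw [min_eq_left (by norm_num : (0:ℝ) ≤ 1), max_eq_right (by norm_num : (0:ℝ) ≤ 1)]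
      constructor
      · intro x hx; exact ⟨le_of_lt hx.1, hx.2⟩
      · intro x hx; exact ⟨hx.1, le_of_lt hx.2⟩
  | cons d w ih =>
      obtain ⟨hd, hw'⟩ := digitsOK_tail hw
      obtain ⟨ihl, ihu⟩ := ih hw'
      set m := min (xval w) (yval w) with hm
      set M := max (xval w) (yval w) with hM
      have hm0 : 0 ≤ m := le_min (xval_mem w hw').1 (yval_mem w hw').1
      have hM1 : M ≤ 1 := max_le (xval_mem w hw').2 (yval_mem w hw').2
      have hmM : m ≤ M := min_le_max
      have hd1 : (1:ℝ) ≤ (d:ℝ) := by exact_mod_cast hd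
      have hx0' : 0 ≤ xval w := (xval_mem w hw').1
      have hy0' : 0 ≤ yval w := (yval_mem w hw').1
      have hdm : (0:ℝ) < (d:ℝ) + m := by linarith
      have hdM : (0:ℝ) < (d:ℝ) + M := by linarith
      have hxc := xval_cons d hd w hw'
      have hyc := yval_cons d hd w hw'
      have hmin : min (xval (d::w)) (yval (d::w)) = 1 / ((d:ℝ) + M) := by
        rw [hxc, hyc]
        rcases le_total (xval w) (yval w) with h | h
        · rw [min_eq_right, hM, max_eq_right h]
          apply one_div_le_one_div_of_le (by linarith) (by linarith)
        · rw [min_eq_left, hM, max_eq_left h]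
          apply one_div_le_one_div_of_le (by linarith) (by linarith)
      have hmax : max (xval (d::w)) (yval (d::w)) = 1 / ((d:ℝ) + m) := by
        rw [hxc, hyc]
        rcases le_total (xval w) (yval w) with h | h
        · rw [max_eq_left, hm, min_eq_left h]
          apply one_div_le_one_div_of_le (by linarith) (by linarith)
        · rw [max_eq_right, hm, min_eq_right h]
          apply one_div_le_one_div_of_le (by linarith) (by linarith)
      rw [hmin, hmax]
      constructor
      · -- lower inclusion
        rintro x ⟨hxl, hxr⟩
        have hdMpos : 0 < 1 / ((d:ℝ) + M) := by positivity
        have hx0 : 0 < x := lt_trans hdMpos hxl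
        have h1 : 0 < (d:ℝ) + m := hdm
        have hx1 : x < 1 := by
          have : 1 / ((d:ℝ) + m) ≤ 1 := by
            rw [div_le_one h1]; linarith
          linarith
        -- 1/x bounds
        have hxinv_lt : 1/x < (d:ℝ) + M := by
          rw [div_lt_iff₀ hx0]
          have hh := (div_lt_iff₀ hdM).mp hxl
          nlinarith [hh]
        have hxinv_gt : (d:ℝ) + m < 1/x := by
          rw [lt_div_iff₀ hx0]
          have hh := (lt_div_iff₀ h1).mp hxr
          nlinarith [hh]
        rw [mem_cyl_cons hd]
        refine ⟨hx0, hx1, by linarith, by linarith, ?_⟩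
        apply ihl
        constructor
        · simp only [hm]; linarith
        · simp only [hM]; linarith
      · -- upper inclusion
        intro x hx
        rw [mem_cyl_cons hd] at hx
        obtain ⟨hx0, hx1, hge, hlt, hmem⟩ := hx
        have ht := ihu hmem
        have htm : m ≤ 1/x - d := ht.1
        have htM : 1/x - d ≤ M := ht.2
        have h4 : (1/x) * x = 1 := by field_simp
        rw [Set.mem_Icc]
        constructor
        · rw [div_le_iff₀ hdM]
          have h3 : 1/x ≤ (d:ℝ) + M := by linarith
          nlinarith [h3, hx0, h4]
        · rw [le_div_iff₀ hdm]
          have h5 : (d:ℝ) + m ≤ 1/x := by linarith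
          nlinarith [h5, hx0, h4]

lemma vol_cyl (w : List ℕ) (hw : digitsOK w) :
    (volume (cyl w)).toReal = |xval w - yval w| := by
  obtain ⟨hl, hu⟩ := cyl_sandwich w hw
  have h1 : volume (Set.Ioo (min (xval w) (yval w)) (max (xval w) (yval w)))
      ≤ volume (cyl w) := measure_mono hl
  have h2 : volume (cyl w)
      ≤ volume (Set.Icc (min (xval w) (yval w)) (max (xval w) (yval w))) := measure_mono hu
  rw [Real.volume_Ioo] at h1
  rw [Real.volume_Icc] at h2
  have hv : volume (cyl w)
      = ENNReal.ofReal (max (xval w) (yval w) - min (xval w) (yval w)) := le_antisymm h2 h1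
  rw [hv, ENNReal.toReal_ofReal (sub_nonneg.mpr (min_le_max : min (xval w) (yval w) ≤ _)),
    max_sub_min_eq_abs]
  exact abs_sub_comm _ _

lemma xval_append (w : List ℕ) (k : ℕ) : xval (w ++ [k]) = Ept w k := by
  simp [xval, Ept, Pp_append, Qq_append]

lemma yval_append (w : List ℕ) (k : ℕ) : yval (w ++ [k]) = Ept w (k+1) := by
  simp only [yval, Ept, Pp_append, Qq_append]
  push_cast
  ring_nf

end CFSep
namespace CFSep

lemma Dt_cast (w : List ℕ) :
    ((Pp w).1:ℝ)*((Qq w).2:ℝ) - ((Pp w).2:ℝ)*((Qq w).1:ℝ) = (Dt w : ℝ) := by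
  simp only [Dt]
  push_cast
  ring

lemma q1_ge (w : List ℕ) (hw : digitsOK w) : (1:ℝ) ≤ ((Qq w).1 : ℝ) := by
  exact_mod_cast Qq1_pos w hw

lemma den_pos (w : List ℕ) (hw : digitsOK w) (k : ℕ) (hk : 1 ≤ k) :
    (0:ℝ) < (k:ℝ)*((Qq w).1:ℝ) + ((Qq w).2:ℝ) := by
  have h1 := q1_ge w hw
  have h2 : (0:ℝ) ≤ ((Qq w).2:ℝ) := by positivity
  have h3 : (1:ℝ) ≤ (k:ℝ) := by exact_mod_cast hk
  nlinarith

lemma Ept_le_succ (w : List ℕ) (hw : digitsOK w) (hD : Dt w = 1) (k : ℕ) (hk : 1 ≤ k) :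
    Ept w k ≤ Ept w (k+1) := by
  have hD' : ((Pp w).1:ℝ)*((Qq w).2:ℝ) - ((Pp w).2:ℝ)*((Qq w).1:ℝ) = 1 := by
    rw [Dt_cast, hD]; norm_num
  have d1 := den_pos w hw k hk
  have d2 := den_pos w hw (k+1) (by omega)
  rw [Ept, Ept, div_le_div_iff₀ d1 (by push_cast at d2 ⊢; linarith)]
  push_cast
  nlinarith [hD']

lemma Ept_succ_le (w : List ℕ) (hw : digitsOK w) (hD : Dt w = -1) (k : ℕ) (hk : 1 ≤ k) :
    Ept w (k+1) ≤ Ept w k := by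
  have hD' : ((Pp w).1:ℝ)*((Qq w).2:ℝ) - ((Pp w).2:ℝ)*((Qq w).1:ℝ) = -1 := by
    rw [Dt_cast, hD]; norm_num
  have d1 := den_pos w hw k hk
  have d2 := den_pos w hw (k+1) (by omega)
  rw [Ept, Ept, div_le_div_iff₀ (by push_cast at d2 ⊢; linarith) d1]
  push_cast
  nlinarith [hD']

lemma Ept_mono (w : List ℕ) (hw : digitsOK w) (hD : Dt w = 1) (j k : ℕ)
    (hj : 1 ≤ j) (hjk : j ≤ k) : Ept w j ≤ Ept w k := by
  induction hjk with
  | refl => exact le_rfl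
  | step h ih =>
      rename_i m
      exact le_trans ih (Ept_le_succ w hw hD m (le_trans hj (by assumption)))

lemma Ept_anti (w : List ℕ) (hw : digitsOK w) (hD : Dt w = -1) (j k : ℕ)
    (hj : 1 ≤ j) (hjk : j ≤ k) : Ept w k ≤ Ept w j := by
  induction hjk with
  | refl => exact le_rfl
  | step h ih =>
      rename_i m
      exact le_trans (Ept_succ_le w hw hD m (le_trans hj (by assumption))) ih

lemma Ept_le_xval (w : List ℕ) (hw : digitsOK w) (hD : Dt w = 1) (k : ℕ) (hk : 1 ≤ k) :
    Ept w k ≤ xval w := by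
  have hD' : ((Pp w).1:ℝ)*((Qq w).2:ℝ) - ((Pp w).2:ℝ)*((Qq w).1:ℝ) = 1 := by
    rw [Dt_cast, hD]; norm_num
  have d1 := den_pos w hw k hk
  have hq := Qq1_pos' w hw
  rw [Ept, xval, div_le_div_iff₀ d1 hq]
  nlinarith [hD']

lemma xval_le_Ept (w : List ℕ) (hw : digitsOK w) (hD : Dt w = -1) (k : ℕ) (hk : 1 ≤ k) :
    xval w ≤ Ept w k := by
  have hD' : ((Pp w).1:ℝ)*((Qq w).2:ℝ) - ((Pp w).2:ℝ)*((Qq w).1:ℝ) = -1 := by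
    rw [Dt_cast, hD]; norm_num
  have d1 := den_pos w hw k hk
  have hq := Qq1_pos' w hw
  rw [Ept, xval, div_le_div_iff₀ hq d1]
  nlinarith [hD']

lemma digitsOK_append {u v : List ℕ} (hu : digitsOK u) (hv : digitsOK v) :
    digitsOK (u ++ v) := by
  intro a ha
  rcases List.mem_append.mp ha with h | h
  · exact hu a h
  · exact hv a h

lemma digitsOK_single {k : ℕ} (hk : 1 ≤ k) : digitsOK [k] := by
  intro a ha; simp at ha; omega

lemma mem_cyl_append_Icc (w : List ℕ) (hw : digitsOK w) (k : ℕ) (hk : 1 ≤ k) {x : ℝ}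
    (hx : x ∈ cyl (w ++ [k])) :
    min (Ept w k) (Ept w (k+1)) ≤ x ∧ x ≤ max (Ept w k) (Ept w (k+1)) := by
  have hw2 : digitsOK (w ++ [k]) := digitsOK_append hw (digitsOK_single hk)
  have h := (cyl_sandwich _ hw2).2 hx
  simp only [xval_append, yval_append] at h
  exact h

lemma sep (w : List ℕ) (hw : digitsOK w) (k mdig Nn : ℕ) (hk : 1 ≤ k) (hm : 1 ≤ mdig)
    (hmN : mdig ≤ Nn) (x : ℝ) (hxc : x ∈ cyl (w ++ [k, mdig])) :
    (volume (cyl (w ++ [k, Nn+1]))).toReal ≤ |x - Ept w k| := by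
  have hu : digitsOK (w ++ [k]) := digitsOK_append hw (digitsOK_single hk)
  have h1 : w ++ [k, mdig] = (w ++ [k]) ++ [mdig] := by simp
  have h2 : w ++ [k, Nn+1] = (w ++ [k]) ++ [Nn+1] := by simp
  set u := w ++ [k] with hu_def
  rw [h2, vol_cyl _ (digitsOK_append hu (digitsOK_single (by omega)))]
  rw [xval_append, yval_append]
  rw [h1] at hxc
  have hxI := mem_cyl_append_Icc u hu mdig hm hxc
  have hxu : xval u = Ept w k := xval_append w k
  rw [← hxu]
  rcases Dt_pm u with hD | hD
  · have e1 : Ept u mdig ≤ Ept u (Nn+1) := Ept_mono u hu hD _ _ hm (by omega)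
    have e1' : Ept u (mdig+1) ≤ Ept u (Nn+1) := Ept_mono u hu hD _ _ (by omega) (by omega)
    have e2 : Ept u (Nn+1) ≤ Ept u (Nn+2) := Ept_le_succ u hu hD _ (by omega)
    have e3 : Ept u (Nn+2) ≤ xval u := Ept_le_xval u hu hD _ (by omega)
    have hx2 : x ≤ Ept u (Nn+1) := le_trans hxI.2 (max_le e1 e1')
    rw [abs_of_nonpos (by linarith), abs_of_nonpos (by linarith)]
    linarith
  · have e1 : Ept u (Nn+1) ≤ Ept u mdig := Ept_anti u hu hD _ _ hm (by omega)
    have e1' : Ept u (Nn+1) ≤ Ept u (mdig+1) := Ept_anti u hu hD _ _ (by omega) (by omega)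
    have e2 : Ept u (Nn+2) ≤ Ept u (Nn+1) := Ept_succ_le u hu hD _ (by omega)
    have e3 : xval u ≤ Ept u (Nn+2) := xval_le_Ept u hu hD _ (by omega)
    have hx2 : Ept u (Nn+1) ≤ x := le_trans (le_min e1 e1') hxI.1
    rw [abs_of_nonneg (by linarith), abs_of_nonneg (by linarith)]
    linarith

end CFSep
namespace CFSep

lemma gauss_iter_mem (x : ℝ) (hx : x ∈ Set.Ioo (0:ℝ) 1) (hxi : Irrational x) (i : ℕ) :
    gaussMap^[i] x ∈ Set.Ioo (0:ℝ) 1 ∧ Irrational (gaussMap^[i] x) := by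
  induction i with
  | zero => exact ⟨hx, hxi⟩
  | succ j ih =>
      obtain ⟨⟨h0, h1⟩, hirr⟩ := ih
      rw [Function.iterate_succ_apply']
      set y := gaussMap^[j] x with hy
      have hyne : y ≠ 0 := ne_of_gt h0
      have hinv : Irrational (1/y) := by
        rw [one_div]; exact hirr.inv
      have hg : gaussMap y = 1/y - ⌊1/y⌋ := by simp [gaussMap, hyne]
      have hgi : Irrational (gaussMap y) := by
        rw [hg]; exact hinv.sub_intCast _
      have hg0 : 0 ≤ gaussMap y := by
        rw [hg]; have := Int.floor_le (1/y); linarith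
      have hg1 : gaussMap y < 1 := by
        rw [hg]; have := Int.lt_floor_add_one (1/y); push_cast at this; linarith
      exact ⟨⟨lt_of_le_of_ne hg0 (Ne.symm hgi.ne_zero), hg1⟩, hgi⟩

lemma pquot_ge_one (x : ℝ) (hx : x ∈ Set.Ico (0:ℝ) 1) (hxi : Irrational x) (i : ℕ) :
    1 ≤ pquot x i := by
  have hx' : x ∈ Set.Ioo (0:ℝ) 1 :=
    ⟨lt_of_le_of_ne hx.1 (Ne.symm hxi.ne_zero), hx.2⟩
  obtain ⟨⟨h0, h1⟩, _⟩ := gauss_iter_mem x hx' hxi i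
  have hfl : (1:ℤ) ≤ ⌊1 / gaussMap^[i] x⌋ := by
    apply Int.le_floor.mpr
    rw [le_div_iff₀ h0]
    push_cast
    linarith
  simp only [pquot]
  omega

lemma mem_cyl_self (x : ℝ) (hx : x ∈ Set.Ico (0:ℝ) 1) (k : ℕ) :
    x ∈ cyl (List.ofFn fun i : Fin k => pquot x i) := by
  refine ⟨hx, fun i hi => ?_⟩
  rw [List.length_ofFn] at hi
  rw [List.getD_eq_getElem?_getD, List.getElem?_ofFn]
  simp [List.ofFnNthVal, hi]

lemma ofFn_snoc (f : ℕ → ℕ) (k : ℕ) :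
    (List.ofFn fun i : Fin (k+1) => f i) = (List.ofFn fun i : Fin k => f i) ++ [f k] := by
  rw [List.ofFn_succ']
  simp [List.concat_eq_append, Fin.last]

lemma vol_single (m : ℕ) (hm : 1 ≤ m) :
    (volume (cyl [m])).toReal = 1/((m:ℝ)*((m:ℝ)+1)) := by
  rw [vol_cyl _ (digitsOK_single hm)]
  have hP : Pp [m] = (1,0) := by simp [Pp, cdStep]
  have hQ : Qq [m] = (m,1) := by simp [Qq, cdStep]
  rw [xval, yval, hP, hQ]
  have hm' : (1:ℝ) ≤ (m:ℝ) := by exact_mod_cast hm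
  have h1 : (0:ℝ) < (m:ℝ) := by linarith
  have h2 : (0:ℝ) < (m:ℝ)+1 := by linarith
  push_cast
  norm_num
  rw [abs_of_nonneg (sub_nonneg.mpr (by
    rw [inv_le_inv₀ h2 h1]
    linarith))]
  field_simp
  ring

lemma main_aux (N : ℕ) (hN : 2 ≤ N) (l : ℝ) (hl1 : 1 ≤ l)
    (hquasi : ∀ u v : List ℕ, (∀ a ∈ u, 1 ≤ a) → (∀ a ∈ v, 1 ≤ a) →
      l⁻¹ * (volume (cyl u)).toReal * (volume (cyl v)).toReal
          ≤ (volume (cyl (u ++ v))).toReal ∧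
      (volume (cyl (u ++ v))).toReal
          ≤ l * (volume (cyl u)).toReal * (volume (cyl v)).toReal)
    (w : List ℕ) (hw : digitsOK w)
    (a a' mc : ℕ) (ha : 1 ≤ a) (haa : a < a') (ha'N : a' ≤ N) (hmc1 : 1 ≤ mc) (hmcN : mc ≤ N)
    (b c : ℝ) (hbmem : b ∈ cyl (w ++ [a])) (hcmem : c ∈ cyl (w ++ [a', mc])) :
    l⁻¹ ^ 2 * (volume (cyl [N+1])).toReal ^ 2 * (volume (cyl w)).toReal ≤ |b - c| := by
  have ha'1 : 1 ≤ a' := by omega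
  have hsep := sep w hw a' mc N ha'1 hmc1 hmcN c hcmem
  have hbI := mem_cyl_append_Icc w hw a ha hbmem
  have hcmem' : c ∈ cyl (w ++ [a']) := by
    have heq : w ++ [a', mc] = (w ++ [a']) ++ [mc] := by simp
    rw [heq] at hcmem
    exact cyl_append_subset _ _ hcmem
  have hcI := mem_cyl_append_Icc w hw a' ha'1 hcmem'
  have hbetween : |c - Ept w a'| ≤ |b - c| := by
    rcases Dt_pm w with hD | hD
    · have k1 : Ept w a ≤ Ept w (a+1) := Ept_le_succ w hw hD a ha
      have k2 : Ept w (a+1) ≤ Ept w a' := Ept_mono w hw hD _ _ (by omega) (by omega)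
      have k3 : Ept w a' ≤ Ept w (a'+1) := Ept_le_succ w hw hD a' ha'1
      have hb2 : b ≤ Ept w (a+1) := le_trans hbI.2 (max_le k1 le_rfl)
      have hc1 : Ept w a' ≤ c := le_trans (le_min le_rfl k3) hcI.1
      rw [abs_of_nonneg (by linarith : (0:ℝ) ≤ c - Ept w a'),
        abs_sub_comm, abs_of_nonneg (by linarith : (0:ℝ) ≤ c - b)]
      linarith
    · have k1 : Ept w (a+1) ≤ Ept w a := Ept_succ_le w hw hD a ha
      have k2 : Ept w a' ≤ Ept w (a+1) := Ept_anti w hw hD _ _ (by omega) (by omega)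
      have k3 : Ept w (a'+1) ≤ Ept w a' := Ept_succ_le w hw hD a' ha'1
      have hb2 : Ept w (a+1) ≤ b := le_trans (le_min k1 le_rfl) hbI.1
      have hc1 : c ≤ Ept w a' := le_trans hcI.2 (max_le le_rfl k3)
      rw [abs_of_nonpos (by linarith : c - Ept w a' ≤ (0:ℝ)),
        abs_sub_comm, abs_of_nonpos (by linarith : c - b ≤ (0:ℝ))]
      linarith
  have hdav : digitsOK [a', N+1] := by intro z hz; simp at hz; omega
  have hdN1 : digitsOK [N+1] := digitsOK_single (by omega)
  have hda' : digitsOK [a'] := digitsOK_single ha'1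
  have q1 := (hquasi w [a', N+1] hw hdav).1
  have q2 := (hquasi [a'] [N+1] hda' hdN1).1
  have hcons : ([a'] ++ [N+1] : List ℕ) = [a', N+1] := rfl
  rw [hcons] at q2
  have v1 : (volume (cyl [N+1])).toReal ≤ (volume (cyl [a'])).toReal := by
    rw [vol_single (N+1) (by omega), vol_single a' ha'1]
    have h1 : (0:ℝ) < (a':ℝ) := by exact_mod_cast ha'1
    have h2 : (a':ℝ) ≤ (N:ℝ)+1 := by exact_mod_cast Nat.le_succ_of_le ha'N
    apply div_le_div_of_nonneg_left (by norm_num) (by nlinarith) ?_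
    push_cast
    nlinarith
  have hl0 : (0:ℝ) < l := lt_of_lt_of_le one_pos hl1
  have hli : (0:ℝ) < l⁻¹ := inv_pos.mpr hl0
  have n1 : (0:ℝ) ≤ (volume (cyl [N+1])).toReal := ENNReal.toReal_nonneg
  have n2 : (0:ℝ) ≤ (volume (cyl w)).toReal := ENNReal.toReal_nonneg
  have n3 : (0:ℝ) ≤ (volume (cyl [a'])).toReal := ENNReal.toReal_nonneg
  calc l⁻¹ ^ 2 * (volume (cyl [N+1])).toReal ^ 2 * (volume (cyl w)).toReal
      = l⁻¹ * (volume (cyl w)).toReal *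
        (l⁻¹ * (volume (cyl [N+1])).toReal * (volume (cyl [N+1])).toReal) := by ring
    _ ≤ l⁻¹ * (volume (cyl w)).toReal *
        (l⁻¹ * (volume (cyl [a'])).toReal * (volume (cyl [N+1])).toReal) := by
        apply mul_le_mul_of_nonneg_left _ (by positivity)
        apply mul_le_mul_of_nonneg_right _ n1
        exact mul_le_mul_of_nonneg_left v1 (le_of_lt hli)
    _ ≤ l⁻¹ * (volume (cyl w)).toReal * (volume (cyl [a', N+1])).toReal := by
        apply mul_le_mul_of_nonneg_left q2 (by positivity)
    _ ≤ (volume (cyl (w ++ [a', N+1]))).toReal := q1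
    _ ≤ |c - Ept w a'| := hsep
    _ ≤ |b - c| := hbetween

end CFSep

open CFSep in
/-- Separation of points with partial quotients at most `N`:
`|b - c| ≥ λ⁻² |I(N+1)|² |I(b_1,…,b_n)|`. -/
theorem cf_separation (N : ℕ) (hN : 2 ≤ N) (l : ℝ) (hl1 : 1 ≤ l)
    (hquasi : ∀ u v : List ℕ, (∀ a ∈ u, 1 ≤ a) → (∀ a ∈ v, 1 ≤ a) →
      l⁻¹ * (volume (cyl u)).toReal * (volume (cyl v)).toReal
          ≤ (volume (cyl (u ++ v))).toReal ∧
      (volume (cyl (u ++ v))).toReal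
          ≤ l * (volume (cyl u)).toReal * (volume (cyl v)).toReal)
    (b c : ℝ) (hb : b ∈ Set.Ico (0:ℝ) 1) (hc : c ∈ Set.Ico (0:ℝ) 1)
    (hbi : Irrational b) (hci : Irrational c) (hbc : b ≠ c)
    (hbN : ∀ i, pquot b i ≤ N) (hcN : ∀ i, pquot c i ≤ N)
    (n : ℕ) (hagree : ∀ i < n, pquot b i = pquot c i)
    (hdiff : pquot b n ≠ pquot c n) :
    l⁻¹ ^ 2 * (volume (cyl [N+1])).toReal ^ 2 *
      (volume (cyl (List.ofFn fun i : Fin n => pquot b i))).toReal ≤ |b - c| := by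
  have hpb : ∀ i, 1 ≤ pquot b i := pquot_ge_one b hb hbi
  have hpc : ∀ i, 1 ≤ pquot c i := pquot_ge_one c hc hci
  set w := List.ofFn (fun i : Fin n => pquot b i) with hw_def
  have hw : digitsOK w := by
    intro z hz
    rw [hw_def, List.mem_ofFn] at hz
    obtain ⟨i, rfl⟩ := hz
    exact hpb i
  have hwc : (List.ofFn fun i : Fin n => pquot c i) = w := by
    rw [hw_def]
    exact congrArg List.ofFn (funext fun i => (hagree i i.2).symm)
  have hbmem1 : b ∈ cyl (w ++ [pquot b n]) := by
    have h := mem_cyl_self b hb (n+1)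
    rwa [ofFn_snoc (pquot b) n] at h
  have hbmem2 : b ∈ cyl (w ++ [pquot b n, pquot b (n+1)]) := by
    have h := mem_cyl_self b hb (n+2)
    rw [ofFn_snoc (pquot b) (n+1), ofFn_snoc (pquot b) n] at h
    rwa [List.append_assoc] at h
  have hcmem1 : c ∈ cyl (w ++ [pquot c n]) := by
    have h := mem_cyl_self c hc (n+1)
    rwa [ofFn_snoc (pquot c) n, hwc] at h
  have hcmem2 : c ∈ cyl (w ++ [pquot c n, pquot c (n+1)]) := by
    have h := mem_cyl_self c hc (n+2)
    rw [ofFn_snoc (pquot c) (n+1), ofFn_snoc (pquot c) n, hwc] at h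
    rwa [List.append_assoc] at h
  rcases lt_or_gt_of_ne hdiff with h | h
  · exact main_aux N hN l hl1 hquasi w hw (pquot b n) (pquot c n) (pquot c (n+1))
      (hpb n) h (hcN n) (hpc (n+1)) (hcN (n+1)) b c hbmem1 hcmem2
  · have := main_aux N hN l hl1 hquasi w hw (pquot c n) (pquot b n) (pquot b (n+1))
      (hpc n) h (hbN n) (hpb (n+1)) (hbN (n+1)) c b hcmem1 hbmem2
    rwa [abs_sub_comm] at this
end
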